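/- arXiv:1910.01136 — 12 statements merged into one kernel-verified Lean document; each statement's English description precedes it below -/
import Mathlib

section
/- Let C be a finite type, S a subset of C, ψ : C → ℂ with ψ(α) ≠ 0 if and only if α ∈ S and Σ_{α} |ψ(α)|² = 1, and let P be the associated local classical projector matrix. If Ψ : C → ℂ satisfies P.mulVec Ψ = 0 and Ψ(α₀) ≠ 0 for some α₀ ∈ S, then Ψ(β) ≠ 0 for every β ∈ S, and moreover Ψ(α)·ψ(β) = Ψ(β)·ψ(α) for all α, β ∈ S; that is, the ratio of ground-state amplitudes between two configurations connected by the projector is determined entirely by the local data ψ. -/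
open Matrix

/-- **Locality of ground-state amplitude ratios.** If `P` is the local classical projector
associated to `(S, ψ)` and `Ψ` is annihilated by `P` with `Ψ α₀ ≠ 0` for some `α₀ ∈ S`,
then `Ψ` is nonzero on all of `S` and the ratios of its amplitudes on `S` agree with those
of the local data `ψ`. -/
theorem ground_state_ratio_local
    {C : Type*} [Fintype C] [DecidableEq C]
    (S : Set C) [DecidablePred (· ∈ S)] (ψ : C → ℂ)
    (hsupp : ∀ α, ψ α ≠ 0 ↔ α ∈ S)
    (hnorm : ∑ α, Complex.normSq (ψ α) = 1)
    (P : Matrix C C ℂ)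
    (hP : ∀ α β, P α β =
      (if α = β ∧ α ∈ S then (1 : ℂ) else 0) - ψ α * (starRingEnd ℂ) (ψ β))
    (Ψ : C → ℂ) (hΨ : P.mulVec Ψ = 0)
    (α₀ : C) (hα₀S : α₀ ∈ S) (hα₀ : Ψ α₀ ≠ 0) :
    (∀ β ∈ S, Ψ β ≠ 0) ∧ (∀ α ∈ S, ∀ β ∈ S, Ψ α * ψ β = Ψ β * ψ α) := by
  set c : ℂ := ∑ β, (starRingEnd ℂ) (ψ β) * Ψ β with hc
  have key : ∀ α ∈ S, Ψ α = ψ α * c := by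
    intro α hα
    have h := congrFun hΨ α
    simp only [Matrix.mulVec, dotProduct, Pi.zero_apply] at h
    have heq : ∑ x, P α x * Ψ x
        = ∑ β, ((if α = β ∧ α ∈ S then (1 : ℂ) else 0) - ψ α * (starRingEnd ℂ) (ψ β)) * Ψ β :=
      Finset.sum_congr rfl fun β _ => by rw [hP]
    have this : ∑ β, ((if α = β ∧ α ∈ S then (1 : ℂ) else 0) - ψ α * (starRingEnd ℂ) (ψ β)) * Ψ β
        = 0 := heq ▸ h
    rw [Finset.sum_congr rfl (fun β _ => sub_mul _ _ _), Finset.sum_sub_distrib] at this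
    have h1 : ∑ β, (if α = β ∧ α ∈ S then (1 : ℂ) else 0) * Ψ β = Ψ α := by
      rw [Finset.sum_eq_single α]
      · simp [hα]
      · intro b _ hb; simp [Ne.symm hb]
      · simp
    have h2 : ∑ β, ψ α * (starRingEnd ℂ) (ψ β) * Ψ β = ψ α * c := by
      rw [hc, Finset.mul_sum]; exact Finset.sum_congr rfl fun β _ => by ring
    rw [h1, h2, sub_eq_zero] at this
    exact this
  have hcne : c ≠ 0 := by
    intro h0
    apply hα₀
    rw [key α₀ hα₀S, h0, mul_zero]
  constructor
  · intro β hβ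
    rw [key β hβ]
    exact mul_ne_zero ((hsupp β).2 hβ) hcne
  · intro α hα β hβ
    rw [key α hα, key β hβ]; ring
end

section
/- (Theorem 1, part 1.) Let H = Σ_{i∈ι} P_i be a frustration-free Hamiltonian that is a sum of local classical projectors, with ground state Ψ, and let A = {α ∈ C | Ψ(α) ≠ 0} be the support of Ψ. Then the span of the basis vectors indexed by A is an invariant subspace of H: for every α with Ψ(α) ≠ 0 and every β with Ψ(β) = 0, the matrix entry H(β,α) = 0 (and by Hermiticity also H(α,β) = 0). -/
open Matrix

/-- **Theorem 1, part 1.** For a frustration-free Hamiltonian `H = ∑ i, P i` that is a sum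
of local classical projectors, with ground state `Ψ`, the span of the configurations in the
support `A = {α | Ψ α ≠ 0}` is an invariant subspace of `H`: all matrix elements of `H`
between the support and its complement vanish. -/
theorem frustration_free_support_invariant
    {C : Type*} [Fintype C] [DecidableEq C]
    {ι : Type*} [Fintype ι]
    (S : ι → Set C) [∀ i, DecidablePred (· ∈ S i)] (ψ : ι → C → ℂ)
    (hsupp : ∀ i α, ψ i α ≠ 0 ↔ α ∈ S i)
    (hnorm : ∀ i, ∑ α, Complex.normSq (ψ i α) = 1)
    (P : ι → Matrix C C ℂ)
    (hP : ∀ i α β, P i α β =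
      (if α = β ∧ α ∈ S i then (1 : ℂ) else 0) - ψ i α * (starRingEnd ℂ) (ψ i β))
    (H : Matrix C C ℂ) (hH : H = ∑ i, P i)
    (Ψ : C → ℂ) (hΨ : ∀ i, (P i).mulVec Ψ = 0) :
    ∀ α β : C, Ψ α ≠ 0 → Ψ β = 0 → H β α = 0 ∧ H α β = 0 := by
  intro α β hα hβ
  have hne : α ≠ β := fun h => hα (h ▸ hβ)
  set c : ι → ℂ := fun i => ∑ δ, (starRingEnd ℂ) (ψ i δ) * Ψ δ with hc
  have hmv : ∀ i γ, (if γ ∈ S i then Ψ γ else 0) = ψ i γ * c i := by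
    intro i γ
    have h0 : (P i).mulVec Ψ γ = 0 := by rw [hΨ i]; rfl
    have h1 : ∑ δ, ((if γ = δ ∧ γ ∈ S i then (1:ℂ) else 0)
        - ψ i γ * (starRingEnd ℂ) (ψ i δ)) * Ψ δ = 0 := by
      simpa [Matrix.mulVec, dotProduct, hP] using h0
    have h2 : ∑ δ, ((if γ = δ ∧ γ ∈ S i then (1:ℂ) else 0)
        - ψ i γ * (starRingEnd ℂ) (ψ i δ)) * Ψ δ
        = (if γ ∈ S i then Ψ γ else 0) - ψ i γ * c i := by
      simp only [sub_mul, Finset.sum_sub_distrib, hc, Finset.mul_sum, mul_assoc]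
      congr 1
      simp [ite_and, ite_mul, Finset.sum_ite_eq]
    rw [h2] at h1
    exact sub_eq_zero.mp h1
  have prod0 : ∀ i, ψ i α * ψ i β = 0 := by
    intro i
    by_cases hβS : β ∈ S i
    · have hcΨ : ψ i β * c i = 0 := by
        have := hmv i β; rw [if_pos hβS, hβ] at this; exact this.symm
      have hci : c i = 0 := by
        rcases mul_eq_zero.mp hcΨ with h | h
        · exact absurd hβS (fun _ => ((hsupp i β).mpr hβS) h)
        · exact h
      have hαS : α ∉ S i := by
        intro hαS
        have := hmv i α
        rw [if_pos hαS, hci, mul_zero] at this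
        exact hα this
      have : ψ i α = 0 := by
        by_contra h; exact hαS ((hsupp i α).mp h)
      simp [this]
    · have : ψ i β = 0 := by
        by_contra h; exact hβS ((hsupp i β).mp h)
      simp [this]
  have key : ∀ i, ψ i β * (starRingEnd ℂ) (ψ i α) = 0
      ∧ ψ i α * (starRingEnd ℂ) (ψ i β) = 0 := by
    intro i
    rcases mul_eq_zero.mp (prod0 i) with h | h <;> simp [h]
  subst hH
  constructor
  · simp only [Matrix.sum_apply, hP]
    refine Finset.sum_eq_zero fun i _ => ?_
    rw [if_neg (fun h => hne h.1.symm), (key i).1, sub_zero]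
  · simp only [Matrix.sum_apply, hP]
    refine Finset.sum_eq_zero fun i _ => ?_
    rw [if_neg (fun h => hne h.1), (key i).2, sub_zero]
end

section
/- (Theorem 1, part 2: positivity of transition rates.) Let H = Σ_{i∈ι} P_i be a frustration-free Hamiltonian that is a sum of local classical projectors with ground state Ψ, let A be the support of Ψ, and let W be the transition-rate matrix W(α,β) = −conj(Ψ(α))·H(α,β)/conj(Ψ(β)). Then for all α ≠ β in A, W(α,β) = Σ_{i : α ∈ S_i and β ∈ S_i} |ψ_i(α)|²; in particular every off-diagonal entry of W on A × A is a nonnegative real number. -/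
open Matrix

/-- **Theorem 1, part 2 (positivity of transition rates).** For a frustration-free
Hamiltonian `H = ∑ i, P i` that is a sum of local classical projectors with ground state
`Ψ`, the off-diagonal entries of the transition-rate matrix
`W α β = -conj (Ψ α) * H α β / conj (Ψ β)` on the support of `Ψ` are the sums
`∑_{i : α ∈ S i ∧ β ∈ S i} |ψ i α|²`; in particular they are nonnegative reals. -/
theorem frustration_free_transition_rates_nonneg
    {C : Type*} [Fintype C] [DecidableEq C]
    {ι : Type*} [Fintype ι]
    (S : ι → Set C) [∀ i, DecidablePred (· ∈ S i)] (ψ : ι → C → ℂ)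
    (hsupp : ∀ i α, ψ i α ≠ 0 ↔ α ∈ S i)
    (hnorm : ∀ i, ∑ α, Complex.normSq (ψ i α) = 1)
    (P : ι → Matrix C C ℂ)
    (hP : ∀ i α β, P i α β =
      (if α = β ∧ α ∈ S i then (1 : ℂ) else 0) - ψ i α * (starRingEnd ℂ) (ψ i β))
    (H : Matrix C C ℂ) (hH : H = ∑ i, P i)
    (Ψ : C → ℂ) (hΨ : ∀ i, (P i).mulVec Ψ = 0)
    (W : Matrix C C ℂ)
    (hW : ∀ α β, W α β = -((starRingEnd ℂ) (Ψ α) * H α β / (starRingEnd ℂ) (Ψ β))) :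
    ∀ α β : C, Ψ α ≠ 0 → Ψ β ≠ 0 → α ≠ β →
      W α β = (↑(∑ i ∈ Finset.univ.filter (fun i => α ∈ S i ∧ β ∈ S i),
                  Complex.normSq (ψ i α)) : ℂ) ∧
      (W α β).im = 0 ∧ 0 ≤ (W α β).re := by
  intro α β hα hβ hne
  -- ground state relation
  have key : ∀ i γ, γ ∈ S i →
      Ψ γ = ψ i γ * ∑ x, (starRingEnd ℂ) (ψ i x) * Ψ x := by
    intro i γ hγ
    have h0 := congrFun (hΨ i) γ
    simp only [Matrix.mulVec, dotProduct, hP, Pi.zero_apply, sub_mul,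
      Finset.sum_sub_distrib] at h0
    have h1 : ∑ x, (if γ = x ∧ γ ∈ S i then (1:ℂ) else 0) * Ψ x = Ψ γ := by
      simp [hγ, ite_and]
    rw [h1] at h0
    have h2 : ∑ x, ψ i γ * (starRingEnd ℂ) (ψ i x) * Ψ x
        = ψ i γ * ∑ x, (starRingEnd ℂ) (ψ i x) * Ψ x := by
      rw [Finset.mul_sum]; exact Finset.sum_congr rfl (fun x _ => by ring)
    rw [h2] at h0
    linear_combination h0
  -- termwise value
  have main : ∀ i, (starRingEnd ℂ) (Ψ α) * (ψ i α * (starRingEnd ℂ) (ψ i β)) / (starRingEnd ℂ) (Ψ β)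
      = if α ∈ S i ∧ β ∈ S i then ((Complex.normSq (ψ i α) : ℂ)) else 0 := by
    intro i
    by_cases hA : α ∈ S i
    · by_cases hB : β ∈ S i
      · set c := ∑ x, (starRingEnd ℂ) (ψ i x) * Ψ x with hc
        have hΨα := key i α hA
        have hΨβ := key i β hB
        have hψβ : ψ i β ≠ 0 := (hsupp i β).2 hB
        have hcne : (starRingEnd ℂ) c ≠ 0 := by
          intro h
          apply hβ
          have hc0 : c = 0 := by simpa using congrArg (starRingEnd ℂ) h
          rw [hΨβ, ← hc, hc0, mul_zero]
        have hψβc : (starRingEnd ℂ) (ψ i β) ≠ 0 := by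
          simpa using hψβ
        simp only [hA, hB, and_self, if_true]
        rw [hΨα, hΨβ, Complex.normSq_eq_conj_mul_self, _root_.map_mul, _root_.map_mul,
          ← hc, div_eq_iff (mul_ne_zero hψβc hcne)]
        ring
      · have : ψ i β = 0 := by
          by_contra h; exact hB ((hsupp i β).1 h)
        simp [this, hB]
    · have : ψ i α = 0 := by
        by_contra h; exact hA ((hsupp i α).1 h)
      simp [this, hA]
  have hHαβ : H α β = ∑ i, -(ψ i α * (starRingEnd ℂ) (ψ i β)) := by
    rw [hH]
    simp only [Matrix.sum_apply, hP]
    exact Finset.sum_congr rfl (fun i _ => by simp [hne])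
  have : W α β = (↑(∑ i ∈ Finset.univ.filter (fun i => α ∈ S i ∧ β ∈ S i),
      Complex.normSq (ψ i α)) : ℂ) := by
    calc W α β = ∑ i, (starRingEnd ℂ) (Ψ α) * (ψ i α * (starRingEnd ℂ) (ψ i β))
          / (starRingEnd ℂ) (Ψ β) := by
          rw [hW, hHαβ, Finset.mul_sum, Finset.sum_div, ← Finset.sum_neg_distrib]
          exact Finset.sum_congr rfl (fun i _ => by ring)
      _ = ∑ i, if α ∈ S i ∧ β ∈ S i then ((Complex.normSq (ψ i α) : ℂ)) else 0 :=
          Finset.sum_congr rfl (fun i _ => main i)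
      _ = _ := by simp [Finset.sum_filter, apply_ite (Complex.ofReal)]
  refine ⟨this, ?_, ?_⟩
  · rw [this]; simp
  · rw [this]; simp only [Complex.ofReal_re]
    exact Finset.sum_nonneg (fun i _ => Complex.normSq_nonneg _)
end

section
/- (Theorem 1, part 2: conservation of classical probability.) Let H = Σ_{i∈ι} P_i be a frustration-free Hamiltonian that is a sum of local classical projectors with ground state Ψ, let A be the support of Ψ, and let W be the transition-rate matrix W(α,β) = −conj(Ψ(α))·H(α,β)/conj(Ψ(β)). Then every column of W restricted to A sums to zero: for every β ∈ A, Σ_{α ∈ A} W(α,β) = 0. -/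
open Matrix

/-- **Theorem 1, part 2 (conservation of classical probability).** For a frustration-free
Hamiltonian `H = ∑ i, P i` that is a sum of local classical projectors with ground state
`Ψ`, every column of the transition-rate matrix `W α β = -conj (Ψ α) * H α β / conj (Ψ β)`
restricted to the support `A = {α | Ψ α ≠ 0}` sums to zero. -/
theorem frustration_free_probability_conservation
    {C : Type*} [Fintype C] [DecidableEq C]
    {ι : Type*} [Fintype ι]
    (S : ι → Set C) [∀ i, DecidablePred (· ∈ S i)] (ψ : ι → C → ℂ)
    (hsupp : ∀ i α, ψ i α ≠ 0 ↔ α ∈ S i)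
    (hnorm : ∀ i, ∑ α, Complex.normSq (ψ i α) = 1)
    (P : ι → Matrix C C ℂ)
    (hP : ∀ i α β, P i α β =
      (if α = β ∧ α ∈ S i then (1 : ℂ) else 0) - ψ i α * (starRingEnd ℂ) (ψ i β))
    (H : Matrix C C ℂ) (hH : H = ∑ i, P i)
    (Ψ : C → ℂ) (hΨ : ∀ i, (P i).mulVec Ψ = 0)
    (W : Matrix C C ℂ)
    (hW : ∀ α β, W α β = -((starRingEnd ℂ) (Ψ α) * H α β / (starRingEnd ℂ) (Ψ β))) :
    ∀ β : C, Ψ β ≠ 0 → ∑ α : {a : C // Ψ a ≠ 0}, W α.1 β = 0 := by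

  intro β hβ
  -- H is Hermitian
  have hHerm : ∀ a b : C, H a b = (starRingEnd ℂ) (H b a) := by
    intro a b
    rw [hH]
    simp only [Matrix.sum_apply, map_sum]
    refine Finset.sum_congr rfl fun i _ => ?_
    rw [hP, hP, map_sub, _root_.map_mul]
    by_cases h : a = b
    · subst h; simp [mul_comm]
    · simp [h, Ne.symm h, mul_comm]
  -- H annihilates Ψ
  have hmul : H.mulVec Ψ = 0 := by
    rw [hH]
    ext a
    simp only [Matrix.mulVec, dotProduct, Matrix.sum_apply, Finset.sum_mul,
      Pi.zero_apply]
    rw [Finset.sum_comm]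
    refine Finset.sum_eq_zero fun i _ => ?_
    have := congrFun (hΨ i) a
    simpa [Matrix.mulVec, dotProduct] using this
  -- full-column sum vanishes
  have key : ∑ α : C, (starRingEnd ℂ) (Ψ α) * H α β = 0 := by
    have : ∑ α : C, (starRingEnd ℂ) (Ψ α) * H α β
        = (starRingEnd ℂ) (∑ α : C, H β α * Ψ α) := by
      rw [map_sum]
      refine Finset.sum_congr rfl fun a _ => ?_
      rw [_root_.map_mul, ← hHerm]
      ring
    rw [this]
    have := congrFun hmul β
    simp only [Matrix.mulVec, dotProduct, Pi.zero_apply] at this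
    rw [this, map_zero]
  -- restrict to the support
  have hsub : ∑ α : {a : C // Ψ a ≠ 0}, W α.1 β
      = ∑ α : C, -((starRingEnd ℂ) (Ψ α) * H α β / (starRingEnd ℂ) (Ψ β)) := by
    rw [← Finset.sum_subtype (Finset.univ.filter fun a => Ψ a ≠ 0)
      (by simp) (fun a => W a β)]
    rw [Finset.sum_filter_of_ne ?_]
    · exact Finset.sum_congr rfl fun a _ => hW a β
    · intro a _ ha
      intro h0
      apply ha
      rw [hW, h0]
      simp
  rw [hsub]
  simp only [neg_div, Finset.sum_neg_distrib, ← Finset.sum_div, key]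
  simp
end

section
/- (Theorem 1, part 2: detailed balance.) Let H = Σ_{i∈ι} P_i be a frustration-free Hamiltonian that is a sum of local classical projectors with ground state Ψ, let A be the support of Ψ, and let W be the transition-rate matrix W(α,β) = −conj(Ψ(α))·H(α,β)/conj(Ψ(β)). Then W satisfies detailed balance with respect to the distribution p⁰(α) = |Ψ(α)|²: for all α, β ∈ A, W(α,β)·|Ψ(β)|² = W(β,α)·|Ψ(α)|². -/
open Matrix

/-- **Theorem 1, part 2 (detailed balance).** For a frustration-free Hamiltonian
`H = ∑ i, P i` that is a sum of local classical projectors with ground state `Ψ`, the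
transition-rate matrix `W α β = -conj (Ψ α) * H α β / conj (Ψ β)` satisfies detailed
balance with respect to the equilibrium distribution `p⁰ α = |Ψ α|²` on the support of
`Ψ`. -/
theorem frustration_free_detailed_balance
    {C : Type*} [Fintype C] [DecidableEq C]
    {ι : Type*} [Fintype ι]
    (S : ι → Set C) [∀ i, DecidablePred (· ∈ S i)] (ψ : ι → C → ℂ)
    (hsupp : ∀ i α, ψ i α ≠ 0 ↔ α ∈ S i)
    (hnorm : ∀ i, ∑ α, Complex.normSq (ψ i α) = 1)
    (P : ι → Matrix C C ℂ)
    (hP : ∀ i α β, P i α β =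
      (if α = β ∧ α ∈ S i then (1 : ℂ) else 0) - ψ i α * (starRingEnd ℂ) (ψ i β))
    (H : Matrix C C ℂ) (hH : H = ∑ i, P i)
    (Ψ : C → ℂ) (hΨ : ∀ i, (P i).mulVec Ψ = 0)
    (W : Matrix C C ℂ)
    (hW : ∀ α β, W α β = -((starRingEnd ℂ) (Ψ α) * H α β / (starRingEnd ℂ) (Ψ β))) :
    ∀ α β : C, Ψ α ≠ 0 → Ψ β ≠ 0 →
      W α β * (↑(Complex.normSq (Ψ β)) : ℂ) = W β α * (↑(Complex.normSq (Ψ α)) : ℂ) := by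
  intro α β hα hβ
  have hα' : (starRingEnd ℂ) (Ψ α) ≠ 0 := by simpa using hα
  have hβ' : (starRingEnd ℂ) (Ψ β) ≠ 0 := by simpa using hβ
  have key : (starRingEnd ℂ) (Ψ α) * H α β * Ψ β
      = (starRingEnd ℂ) (Ψ β) * H β α * Ψ α := by
    subst hH
    simp only [Matrix.sum_apply, Finset.mul_sum, Finset.sum_mul]
    refine Finset.sum_congr rfl fun i _ => ?_
    set c : ℂ := ∑ γ, (starRingEnd ℂ) (ψ i γ) * Ψ γ with hc
    have hfact : ∀ δ, (starRingEnd ℂ) (ψ i δ) * Ψ δ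
        = (Complex.normSq (ψ i δ) : ℂ) * c := by
      intro δ
      have h0 := congrFun (hΨ i) δ
      simp only [Matrix.mulVec, dotProduct, Pi.zero_apply, hP, sub_mul,
        Finset.sum_sub_distrib, ite_mul, one_mul, zero_mul, mul_assoc] at h0
      rw [← Finset.mul_sum, ← hc] at h0
      by_cases hδ : δ ∈ S i
      · simp only [hδ, and_true] at h0
        rw [Finset.sum_ite_eq] at h0
        simp only [Finset.mem_univ, if_true] at h0
        have hΨδ : Ψ δ = ψ i δ * c := by
          have := sub_eq_zero.mp h0
          linear_combination this
        rw [hΨδ, Complex.normSq_eq_conj_mul_self]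
        ring
      · have hz : ψ i δ = 0 := by
          by_contra h
          exact hδ ((hsupp i δ).mp h)
        simp [hz]
    by_cases hab : α = β
    · subst hab; rfl
    · have hcα := congrArg (starRingEnd ℂ) (hfact α)
      simp only [_root_.map_mul, Complex.conj_conj, Complex.conj_ofReal] at hcα
      have hcβ := congrArg (starRingEnd ℂ) (hfact β)
      simp only [_root_.map_mul, Complex.conj_conj, Complex.conj_ofReal] at hcβ
      have hfα := hfact α
      have hfβ := hfact β
      rw [hP i α β, hP i β α]
      simp only [hab, Ne.symm hab, false_and, if_false]
      calc (starRingEnd ℂ) (Ψ α) * ((0 : ℂ) - ψ i α * (starRingEnd ℂ) (ψ i β)) * Ψ β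
          = -((ψ i α * (starRingEnd ℂ) (Ψ α)) * ((starRingEnd ℂ) (ψ i β) * Ψ β)) := by
            ring
        _ = -(((Complex.normSq (ψ i α) : ℂ) * (starRingEnd ℂ) c) *
              ((Complex.normSq (ψ i β) : ℂ) * c)) := by rw [hcα, hfβ]
        _ = -((ψ i β * (starRingEnd ℂ) (Ψ β)) * ((starRingEnd ℂ) (ψ i α) * Ψ α)) := by
            rw [hcβ, hfα]; ring
        _ = (starRingEnd ℂ) (Ψ β) * ((0 : ℂ) - ψ i β * (starRingEnd ℂ) (ψ i α)) * Ψ α := by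
            ring
  rw [hW, hW, ← Complex.mul_conj, ← Complex.mul_conj]
  field_simp
  linear_combination (-1 : ℂ) * key
end

section
/- (Corollary 2: quantum–Markov correspondence for diagonal operators.) Let C be a finite type, H ∈ Matrix C C ℂ Hermitian, and Ψ : C → ℂ with Ψ(α) ≠ 0 for every α and H.mulVec Ψ = 0. Let W be the matrix W(α,β) = −conj(Ψ(α))·H(α,β)/conj(Ψ(β)) and p⁰(α) = |Ψ(α)|². Then for every n ≥ 1, every family of diagonal matrices O₁, …, Oₙ ∈ Matrix C C ℂ, and all real numbers τ₁, …, τₙ₋₁, the imaginary-time quantum correlator equals the classical Markov correlator: star(Ψ) ⬝ᵥ (Oₙ * exp(−τₙ₋₁ • H) * Oₙ₋₁ * ⋯ * O₂ * exp(−τ₁ • H) * O₁).mulVec Ψ = 𝟙 ⬝ᵥ (Oₙ * exp(τₙ₋₁ • W) * Oₙ₋₁ * ⋯ * O₂ * exp(τ₁ • W) * O₁).mulVec p⁰, where 𝟙 is the all-ones vector and exp is the matrix exponential. -/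
open Matrix

/-- The alternating product `Oₙ * exp(−τₙ₋₁ • H) * Oₙ₋₁ * ⋯ * O₂ * exp(−τ₁ • H) * O₁`
appearing in imaginary-time quantum correlators. -/
noncomputable def imagTimeChain {C : Type*} [Fintype C] [DecidableEq C]
    (H : Matrix C C ℂ) : (n : ℕ) → (Fin (n + 1) → Matrix C C ℂ) → (Fin n → ℝ) →
      Matrix C C ℂ
  | 0, O, _ => O 0
  | n + 1, O, τ =>
      O (Fin.last (n + 1)) * NormedSpace.exp ((-(τ (Fin.last n))) • H) *
        imagTimeChain H n (fun i => O i.castSucc) (fun i => τ i.castSucc)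

/-- The alternating product `Oₙ * exp(τₙ₋₁ • W) * Oₙ₋₁ * ⋯ * O₂ * exp(τ₁ • W) * O₁`
appearing in classical Markov correlators. -/
noncomputable def markovChain {C : Type*} [Fintype C] [DecidableEq C]
    (W : Matrix C C ℂ) : (n : ℕ) → (Fin (n + 1) → Matrix C C ℂ) → (Fin n → ℝ) →
      Matrix C C ℂ
  | 0, O, _ => O 0
  | n + 1, O, τ =>
      O (Fin.last (n + 1)) * NormedSpace.exp ((τ (Fin.last n)) • W) *
        markovChain W n (fun i => O i.castSucc) (fun i => τ i.castSucc)

/-- **Corollary 2: quantum–Markov correspondence for diagonal operators.** For a Hermitian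
`H` annihilating an everywhere-nonzero state `Ψ`, with transition-rate matrix
`W α β = -conj (Ψ α) * H α β / conj (Ψ β)` and equilibrium distribution `p⁰ α = |Ψ α|²`,
every imaginary-time correlator of diagonal operators equals the corresponding classical
Markov correlator. -/
theorem diagonal_correlator_quantum_markov
    {C : Type*} [Fintype C] [DecidableEq C]
    (H : Matrix C C ℂ) (hH : H.IsHermitian)
    (Ψ : C → ℂ) (hΨne : ∀ α, Ψ α ≠ 0) (hΨ : H.mulVec Ψ = 0)
    (W : Matrix C C ℂ)
    (hW : ∀ α β, W α β = -((starRingEnd ℂ) (Ψ α) * H α β / (starRingEnd ℂ) (Ψ β)))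
    (p₀ : C → ℂ) (hp₀ : ∀ α, p₀ α = (↑(Complex.normSq (Ψ α)) : ℂ))
    (n : ℕ) (O : Fin (n + 1) → Matrix C C ℂ) (hO : ∀ k, (O k).IsDiag)
    (τ : Fin n → ℝ) :
    star Ψ ⬝ᵥ (imagTimeChain H n O τ).mulVec Ψ =
      (fun _ => (1 : ℂ)) ⬝ᵥ (markovChain W n O τ).mulVec p₀ := by
  classical
  set d : C → ℂ := fun α => (starRingEnd ℂ) (Ψ α) with hd
  have hdne : ∀ α, d α ≠ 0 := fun α => by
    simp [hd, hΨne α]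
  obtain ⟨u, hu1, hu2⟩ : ∃ u : (Matrix C C ℂ)ˣ, (u : Matrix C C ℂ) = Matrix.diagonal d ∧
      (↑u⁻¹ : Matrix C C ℂ) = Matrix.diagonal (fun α => (d α)⁻¹) :=
    ⟨{ val := Matrix.diagonal d
       inv := Matrix.diagonal (fun α => (d α)⁻¹)
       val_inv := by
         rw [Matrix.diagonal_mul_diagonal]
         simp [Matrix.diagonal_one, mul_inv_cancel₀, hdne]
       inv_val := by
         rw [Matrix.diagonal_mul_diagonal]
         simp [Matrix.diagonal_one, inv_mul_cancel₀, hdne] }, rfl, rfl⟩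
  -- diagonal matrices commute with u
  have hcomm : ∀ A : Matrix C C ℂ, A.IsDiag → (u : Matrix C C ℂ) * A * (↑u⁻¹ : Matrix C C ℂ) = A := by
    intro A hA
    have : A = Matrix.diagonal A.diag := hA.diagonal_diag.symm
    rw [this, hu1, hu2]
    rw [Matrix.diagonal_mul_diagonal, Matrix.diagonal_mul_diagonal]
    rw [show (fun i => d i * A.diag i * (d i)⁻¹) = A.diag from
      funext fun i => by rw [mul_right_comm, mul_inv_cancel₀ (hdne i), one_mul]]
  have hWc : ∀ t : ℝ, t • W = (u : Matrix C C ℂ) * ((-t) • H) * (↑u⁻¹ : Matrix C C ℂ) := by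
    intro t
    rw [hu1, hu2]
    ext α β
    rw [Matrix.mul_diagonal, Matrix.diagonal_mul]
    simp only [hW, Matrix.smul_apply, smul_eq_mul]
    push_cast
    have hb : (starRingEnd ℂ) (Ψ β) ≠ 0 := hdne β
    simp only [hd, Complex.real_smul, Complex.ofReal_neg]
    ring
  have key : ∀ (n : ℕ) (O : Fin (n + 1) → Matrix C C ℂ) (_ : ∀ k, (O k).IsDiag)
      (τ : Fin n → ℝ),
      markovChain W n O τ =
        (u : Matrix C C ℂ) * imagTimeChain H n O τ * (↑u⁻¹ : Matrix C C ℂ) := by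
    intro n
    induction n with
    | zero => intro O hO τ; exact (hcomm (O 0) (hO 0)).symm
    | succ m ih =>
      intro O hO τ
      have hcm : O (Fin.last (m+1)) * (u : Matrix C C ℂ) =
          (u : Matrix C C ℂ) * O (Fin.last (m+1)) := by
        conv_lhs => rw [← hcomm (O (Fin.last (m+1))) (hO (Fin.last (m+1)))]
        rw [Units.inv_mul_cancel_right]
      rw [markovChain, imagTimeChain,
        ih (fun i => O i.castSucc) (fun i => hO i.castSucc) (fun i => τ i.castSucc),
        hWc (τ (Fin.last m)), Matrix.exp_units_conj]
      simp only [Matrix.mul_assoc, Units.inv_mul_cancel_left]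
      rw [← Matrix.mul_assoc (O (Fin.last (m+1))), hcm, Matrix.mul_assoc]
  rw [key n O hO τ]
  set M := imagTimeChain H n O τ
  have hinvp : (↑u⁻¹ : Matrix C C ℂ).mulVec p₀ = Ψ := by
    rw [hu2]
    funext α
    rw [Matrix.mulVec_diagonal]
    rw [hp₀ α, Complex.normSq_eq_conj_mul_self]
    field_simp [hdne α]
    rfl
  have hrhs : ((u : Matrix C C ℂ) * M * (↑u⁻¹ : Matrix C C ℂ)).mulVec p₀ =
      (u : Matrix C C ℂ).mulVec (M.mulVec Ψ) := by
    rw [← hinvp]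
    simp only [← Matrix.mulVec_mulVec, Matrix.mul_assoc]
  rw [hrhs, hu1]
  simp only [dotProduct, Matrix.mulVec_diagonal, one_mul, Pi.star_apply,
    RCLike.star_def]
  rfl
end

section
/- (Corollary 4: classical correspondence for off-diagonal operators.) Let C be a finite type, H ∈ Matrix C C ℂ Hermitian, and Ψ : C → ℂ with Ψ(α) ≠ 0 for every α and H.mulVec Ψ = 0. Let W be the matrix W(α,β) = −conj(Ψ(α))·H(α,β)/conj(Ψ(β)). Let O₁, O₂ ∈ Matrix C C ℂ be Hermitian and define the diagonal classical observables c₁, c₂ : C → ℂ by cᵢ(α) = (Oᵢ.mulVec Ψ)(α) / Ψ(α). Then for every τ ∈ ℝ, star(Ψ) ⬝ᵥ (O₁ * exp(−τ • H) * O₂).mulVec Ψ = Σ_{α,β} conj(c₁(α)) · (exp(τ • W))(α,β) · c₂(β) · |Ψ(β)|². That is, the imaginary-time two-point function of off-diagonal quantum operators equals a two-point function of diagonal observables in the classical Markov process. -/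
open Matrix

/-- **Corollary 4: classical correspondence for off-diagonal operators.** For a Hermitian
`H` annihilating an everywhere-nonzero state `Ψ`, with transition-rate matrix
`W α β = -conj (Ψ α) * H α β / conj (Ψ β)`, the imaginary-time two-point function of two
Hermitian (possibly off-diagonal) operators `O₁, O₂` equals the classical Markov two-point
function of the diagonal observables `cᵢ α = (Oᵢ.mulVec Ψ) α / Ψ α` in the equilibrium
distribution `p⁰ α = |Ψ α|²`. -/
theorem offdiagonal_correlator_quantum_markov
    {C : Type*} [Fintype C] [DecidableEq C]
    (H : Matrix C C ℂ) (hH : H.IsHermitian)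
    (Ψ : C → ℂ) (hΨne : ∀ α, Ψ α ≠ 0) (hΨ : H.mulVec Ψ = 0)
    (W : Matrix C C ℂ)
    (hW : ∀ α β, W α β = -((starRingEnd ℂ) (Ψ α) * H α β / (starRingEnd ℂ) (Ψ β)))
    (O₁ O₂ : Matrix C C ℂ) (hO₁ : O₁.IsHermitian) (hO₂ : O₂.IsHermitian)
    (c₁ c₂ : C → ℂ)
    (hc₁ : ∀ α, c₁ α = (O₁.mulVec Ψ) α / Ψ α)
    (hc₂ : ∀ α, c₂ α = (O₂.mulVec Ψ) α / Ψ α)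
    (τ : ℝ) :
    star Ψ ⬝ᵥ (O₁ * NormedSpace.exp ((-τ) • H) * O₂).mulVec Ψ =
      ∑ α, ∑ β, (starRingEnd ℂ) (c₁ α) * (NormedSpace.exp (τ • W)) α β * c₂ β *
        (↑(Complex.normSq (Ψ β)) : ℂ) := by
  set D : Matrix C C ℂ := diagonal (fun α => (starRingEnd ℂ) (Ψ α)) with hD
  have hDunit : IsUnit D := by
    rw [Matrix.isUnit_iff_isUnit_det, hD, det_diagonal]
    exact isUnit_iff_ne_zero.mpr (Finset.prod_ne_zero_iff.mpr fun α _ => by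
      simpa using hΨne α)
  have hDinv : D⁻¹ = diagonal (fun α => ((starRingEnd ℂ) (Ψ α))⁻¹) := by
    refine Matrix.inv_eq_right_inv ?_
    rw [hD, Matrix.diagonal_mul_diagonal]
    convert Matrix.diagonal_one with α
    exact mul_inv_cancel₀ (by simpa using hΨne α)
  have hWconj : τ • W = D * ((-τ) • H) * D⁻¹ := by
    rw [hDinv, hD]
    ext α β
    simp only [Matrix.smul_apply, hW, Matrix.diagonal_mul, Matrix.mul_diagonal,
      smul_eq_mul, Complex.real_smul, div_eq_mul_inv]
    push_cast
    ring
  have hexp : NormedSpace.exp (τ • W) = D * NormedSpace.exp ((-τ) • H) * D⁻¹ := by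
    rw [hWconj, Matrix.exp_conj D _ hDunit]
  have hexpE : ∀ α β, (NormedSpace.exp (τ • W)) α β =
      (starRingEnd ℂ) (Ψ α) * (NormedSpace.exp ((-τ) • H)) α β *
        ((starRingEnd ℂ) (Ψ β))⁻¹ := by
    intro α β
    rw [hexp, hDinv, hD]
    simp [Matrix.diagonal_mul, Matrix.mul_diagonal]
  -- rewrite LHS as a double sum
  have hL : star Ψ ⬝ᵥ (O₁ * NormedSpace.exp ((-τ) • H) * O₂).mulVec Ψ =
      ∑ α, ∑ β, (starRingEnd ℂ) ((O₁.mulVec Ψ) α) *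
        (NormedSpace.exp ((-τ) • H)) α β * ((O₂.mulVec Ψ) β) := by
    have h1 : (O₁ * NormedSpace.exp ((-τ) • H) * O₂).mulVec Ψ =
        O₁.mulVec ((NormedSpace.exp ((-τ) • H)).mulVec (O₂.mulVec Ψ)) := by
      rw [← Matrix.mulVec_mulVec, ← Matrix.mulVec_mulVec]
    rw [h1]
    have h2 : star Ψ ⬝ᵥ O₁.mulVec ((NormedSpace.exp ((-τ) • H)).mulVec (O₂.mulVec Ψ)) =
        star (O₁.mulVec Ψ) ⬝ᵥ (NormedSpace.exp ((-τ) • H)).mulVec (O₂.mulVec Ψ) := by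
      rw [Matrix.dotProduct_mulVec, Matrix.star_mulVec, hO₁.eq]
    rw [h2]
    simp only [dotProduct, Matrix.mulVec, Pi.star_apply,
      Finset.mul_sum, RCLike.star_def]
    refine Finset.sum_congr rfl fun α _ => Finset.sum_congr rfl fun β _ =>
      Finset.sum_congr rfl fun x _ => by ring
  rw [hL]
  refine Finset.sum_congr rfl fun α _ => Finset.sum_congr rfl fun β _ => ?_
  rw [hexpE α β, hc₁, hc₂]
  have hα : (starRingEnd ℂ) (Ψ α) ≠ 0 := by simpa using hΨne α
  have hβ : (starRingEnd ℂ) (Ψ β) ≠ 0 := by simpa using hΨne β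
  have hnsq : (↑(Complex.normSq (Ψ β)) : ℂ) = Ψ β * (starRingEnd ℂ) (Ψ β) := by
    rw [Complex.normSq_eq_conj_mul_self]; ring
  rw [hnsq, map_div₀]
  field_simp [hΨne β]
end

section
/- (Vanishing of correlators of hidden operators.) Let A and B be finite types, Ψ : A × B → ℂ, and let ρ ∈ Matrix A A ℂ be the reduced density matrix ρ(a,a') = Σ_{b ∈ B} Ψ(a,b)·conj(Ψ(a',b)). Suppose u : A → ℂ satisfies ρ.mulVec u = 0. Then for every φ : A → ℂ and every X ∈ Matrix B B ℂ, the hidden operator M ∈ Matrix (A × B) (A × B) ℂ with entries M((a,b),(a',b')) = φ(a)·conj(u(a'))·X(b,b') annihilates Ψ: M.mulVec Ψ = 0. Consequently, for every N ∈ Matrix (A × B) (A × B) ℂ, the correlator star(Ψ) ⬝ᵥ (N * M).mulVec Ψ = 0; in particular all equal-time correlation functions of the hidden operator |φ⟩⟨u| with operators supported outside A vanish. -/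
open Matrix

/-- **Vanishing of correlators of hidden operators.** If the reduced density matrix
`ρ a a' = ∑ b, Ψ (a,b) * conj (Ψ (a',b))` annihilates `u`, then every hidden operator
`M ((a,b),(a',b')) = φ a * conj (u a') * X b b'` annihilates the state `Ψ`, and hence
all its equal-time correlators with arbitrary operators `N` vanish. -/
theorem hidden_operator_correlators_vanish
    {A B : Type*} [Fintype A] [Fintype B] [DecidableEq A] [DecidableEq B]
    (Ψ : A × B → ℂ)
    (ρ : Matrix A A ℂ)
    (hρ : ∀ a a', ρ a a' = ∑ b, Ψ (a, b) * (starRingEnd ℂ) (Ψ (a', b)))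
    (u : A → ℂ) (hu : ρ.mulVec u = 0)
    (φ : A → ℂ) (X : Matrix B B ℂ)
    (M : Matrix (A × B) (A × B) ℂ)
    (hM : ∀ a b a' b', M (a, b) (a', b') = φ a * (starRingEnd ℂ) (u a') * X b b') :
    M.mulVec Ψ = 0 ∧
      ∀ N : Matrix (A × B) (A × B) ℂ, star Ψ ⬝ᵥ (N * M).mulVec Ψ = 0 := by
  set v : B → ℂ := fun b => ∑ a, (starRingEnd ℂ) (u a) * Ψ (a, b) with hvdef
  have key : (∑ b, Complex.normSq (v b) : ℂ) = 0 := by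
    have h0 : star u ⬝ᵥ ρ.mulVec u = 0 := by rw [hu]; simp
    have h1 : ∑ b, v b * (starRingEnd ℂ) (v b) = star u ⬝ᵥ ρ.mulVec u := by
      simp only [hvdef, dotProduct, mulVec, hρ, Pi.star_apply, RCLike.star_def,
        map_sum, _root_.map_mul, Complex.conj_conj, Finset.mul_sum, Finset.sum_mul]
      rw [Finset.sum_comm]
      conv_rhs => rw [Finset.sum_comm]
      refine Finset.sum_congr rfl fun a _ => ?_
      rw [Finset.sum_comm]
      refine Finset.sum_congr rfl fun a' _ => ?_
      refine Finset.sum_congr rfl fun b _ => ?_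
      ring
    rw [h0] at h1
    simp only [Complex.mul_conj] at h1
    exact h1
  have hv : ∀ b, v b = 0 := by
    have h2 : (∑ b, Complex.normSq (v b) : ℝ) = 0 := by exact_mod_cast key
    intro b
    have h3 := (Finset.sum_eq_zero_iff_of_nonneg
      (fun b _ => Complex.normSq_nonneg (v b))).mp h2 b (Finset.mem_univ b)
    exact Complex.normSq_eq_zero.mp h3
  have hMΨ : M.mulVec Ψ = 0 := by
    funext p
    obtain ⟨a, b⟩ := p
    simp only [mulVec, dotProduct, Pi.zero_apply]
    rw [Fintype.sum_prod_type, Finset.sum_comm]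
    calc ∑ b' : B, ∑ a' : A, M (a, b) (a', b') * Ψ (a', b')
        = ∑ b' : B, φ a * X b b' * v b' := by
          refine Finset.sum_congr rfl fun b' _ => ?_
          simp only [hvdef, Finset.mul_sum]
          refine Finset.sum_congr rfl fun a' _ => ?_
          rw [hM]; ring
      _ = 0 := by simp [hv]
  refine ⟨hMΨ, fun N => ?_⟩
  rw [← mulVec_mulVec, hMΨ]
  simp
end

section
/- (The Jones–Wenzl state spans the kernel at d = √2.) Let M₃(√2) be the 5 × 5 real (or complex) matrix with rows [d³, d, d², d², d²], [d, d³, d², d², d²], [d², d², d³, d, d], [d², d², d, d³, d], [d², d², d, d, d³] evaluated at d = √2, and let v be the vector (√2, √2, −1, −1, −1). Then M₃(√2).mulVec v = 0, and every vector w with M₃(√2).mulVec w = 0 is a scalar multiple of v; that is, the kernel of M₃ at d = √2 is one-dimensional and is spanned by the Jones–Wenzl state √2(|α₁⟩ + |α₂⟩) − (|β₁⟩ + |β₂⟩ + |β₃⟩). -/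
open Matrix

/-- The three-strand connectivity (Gram) matrix `M³` of the loop model: rows and columns
are indexed by the five non-crossing perfect matchings of six boundary points (first the
two matchings `α₁, α₂`, then the three matchings `β₁, β₂, β₃`), and the `(α,β)` entry is
`d` raised to the number of closed loops formed by gluing matching `α` to matching `β`. -/
def M3 (d : ℂ) : Matrix (Fin 5) (Fin 5) ℂ :=
  !![d^3, d,   d^2, d^2, d^2;
     d,   d^3, d^2, d^2, d^2;
     d^2, d^2, d^3, d,   d;
     d^2, d^2, d,   d^3, d;
     d^2, d^2, d,   d,   d^3]

/-- **The Jones–Wenzl state spans the kernel of `M₃` at `d = √2`.** The vector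
`v = (√2, √2, −1, −1, −1)`, i.e. the Jones–Wenzl state
`√2(|α₁⟩ + |α₂⟩) − (|β₁⟩ + |β₂⟩ + |β₃⟩)`, is annihilated by `M₃(√2)`, and every vector
annihilated by `M₃(√2)` is a scalar multiple of `v`. -/
theorem kernel_M3_sqrt_two_is_JW :
    (M3 (Real.sqrt 2 : ℂ)).mulVec
        ![(Real.sqrt 2 : ℂ), (Real.sqrt 2 : ℂ), -1, -1, -1] = 0 ∧
      ∀ w : Fin 5 → ℂ, (M3 (Real.sqrt 2 : ℂ)).mulVec w = 0 →
        ∃ c : ℂ, w = c • ![(Real.sqrt 2 : ℂ), (Real.sqrt 2 : ℂ), -1, -1, -1] := by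
  have h2 : (Real.sqrt 2 : ℂ) ^ 2 = 2 := by
    norm_cast
    rw [Real.sq_sqrt] <;> norm_num
  have hs0 : (Real.sqrt 2 : ℂ) ≠ 0 := by
    intro h
    rw [h] at h2
    norm_num at h2
  constructor
  · funext i
    fin_cases i <;>
      simp [M3, mulVec, dotProduct, Fin.sum_univ_five] <;>
      first
        | linear_combination ((Real.sqrt 2 : ℂ) ^ 2) * h2
        | linear_combination (Real.sqrt 2 : ℂ) * h2
  · intro w hw
    have e0 := congrFun hw 0
    have e1 := congrFun hw 1
    have e2 := congrFun hw 2
    have e3 := congrFun hw 3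
    have e4 := congrFun hw 4
    simp [M3, mulVec, dotProduct, Fin.sum_univ_five] at e0 e1 e2 e3 e4
    have h01 : w 0 = w 1 := by
      have h : (Real.sqrt 2 : ℂ) * (w 0 - w 1) = 0 := by
        linear_combination e0 - e1 - (Real.sqrt 2 : ℂ) * (w 0 - w 1) * h2
      exact sub_eq_zero.mp ((mul_eq_zero.mp h).resolve_left hs0)
    have h23 : w 2 = w 3 := by
      have h : (Real.sqrt 2 : ℂ) * (w 2 - w 3) = 0 := by
        linear_combination e2 - e3 - (Real.sqrt 2 : ℂ) * (w 2 - w 3) * h2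
      exact sub_eq_zero.mp ((mul_eq_zero.mp h).resolve_left hs0)
    have h24 : w 2 = w 4 := by
      have h : (Real.sqrt 2 : ℂ) * (w 2 - w 4) = 0 := by
        linear_combination e2 - e4 - (Real.sqrt 2 : ℂ) * (w 2 - w 4) * h2
      exact sub_eq_zero.mp ((mul_eq_zero.mp h).resolve_left hs0)
    have hkey : (Real.sqrt 2 : ℂ) * w 0 + 2 * w 2 = 0 := by
      linear_combination (1/3 : ℂ) * e0 + ((Real.sqrt 2 : ℂ)/3) * h01 +
        ((Real.sqrt 2 : ℂ)^2/3) * h23 + ((Real.sqrt 2 : ℂ)^2/3) * h24 -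
        ((Real.sqrt 2 : ℂ) * w 0 / 3 + w 2) * h2
    refine ⟨w 0 / (Real.sqrt 2 : ℂ), ?_⟩
    funext i
    fin_cases i <;>
      (try simp [Pi.smul_apply, smul_eq_mul]) <;> (try field_simp) <;>
      first
        | rfl
        | linear_combination -h01
        | linear_combination ((Real.sqrt 2 : ℂ)/2) * hkey - (w 0 / 2) * h2
        | linear_combination ((Real.sqrt 2 : ℂ)/2) * hkey - (w 0 / 2) * h2 -
            (Real.sqrt 2 : ℂ) * h23
        | linear_combination ((Real.sqrt 2 : ℂ)/2) * hkey - (w 0 / 2) * h2 -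
            (Real.sqrt 2 : ℂ) * h24
end

section
/- (The parity–cube-root solutions of the Jones–Wenzl winding constraints.) Let ω ∈ ℂ satisfy ω² + ω + 1 = 0. Define g : ℤ → ℤ → ℂ by: g a b = 1 if a and b are both odd; g a b = ω if a is even and b is odd; g a b = ω² if a is odd and b is even; g a b = 0 if a and b are both even. Then for all integers m, n, r, s with m·s − n·r = 1, one has g (m + r) (n + s) + g m n + g r s = 0. (Consequently ψ(2m,2n) := g m n, ψ(0,0) := 0 solves the (even, even)-sector Jones–Wenzl constraint.) -/
/-- **The parity–cube-root solutions of the Jones–Wenzl winding constraints.** Let `ω` be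
a primitive cube root of unity (`ω² + ω + 1 = 0`) and let `g : ℤ → ℤ → ℂ` take the values
`1, ω, ω², 0` on the parity classes (odd, odd), (even, odd), (odd, even), (even, even)
respectively.  Then for all integers `m, n, r, s` with `m·s − n·r = 1`,
`g (m+r) (n+s) + g m n + g r s = 0`; hence `ψ(2m,2n) := g m n`, `ψ(0,0) := 0` solves the
(even, even)-sector Jones–Wenzl constraint on the torus. -/
theorem parity_cube_root_solution
    (ω : ℂ) (hω : ω ^ 2 + ω + 1 = 0)
    (g : ℤ → ℤ → ℂ)
    (hoo : ∀ a b : ℤ, Odd a → Odd b → g a b = 1)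
    (heo : ∀ a b : ℤ, Even a → Odd b → g a b = ω)
    (hoe : ∀ a b : ℤ, Odd a → Even b → g a b = ω ^ 2)
    (hee : ∀ a b : ℤ, Even a → Even b → g a b = 0) :
    ∀ m n r s : ℤ, m * s - n * r = 1 →
      g (m + r) (n + s) + g m n + g r s = 0 := by
  intro m n r s h
  have hodd : Odd (m * s - n * r) := by rw [h]; exact odd_one
  rw [Int.odd_iff, Int.sub_emod, Int.mul_emod m s, Int.mul_emod n r] at hodd
  rcases Int.even_or_odd m with hm | hm <;>
  rcases Int.even_or_odd n with hn | hn <;>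
  rcases Int.even_or_odd r with hr | hr <;>
  rcases Int.even_or_odd s with hs | hs <;>
  rcases Int.even_or_odd (m + r) with hmr | hmr <;>
  rcases Int.even_or_odd (n + s) with hns | hns <;>
  first
  | (exfalso;
     simp only [Int.even_iff, Int.odd_iff] at hm hn hr hs hmr hns;
     simp only [hm, hn, hr, hs] at hodd; omega)
  | ((first
      | rw [hoo (m + r) (n + s) hmr hns]
      | rw [heo (m + r) (n + s) hmr hns]
      | rw [hoe (m + r) (n + s) hmr hns]);
     (first | rw [hoo m n hm hn] | rw [heo m n hm hn] | rw [hoe m n hm hn]);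
     (first | rw [hoo r s hr hs] | rw [heo r s hr hs] | rw [hoe r s hr hs]);
     linear_combination hω)
end

section
/- (Determinacy of (even, even)-sector zero-energy states.) Let f : ℤ → ℤ → ℂ satisfy: (i) f (−a) (−b) = f a b for all integers a, b; (ii) for all integers m, n, r, s with m·s − n·r = 1, f (m + r) (n + s) + f m n + f r s = 0; and (iii) f 1 0 = 0 and f 0 1 = 0. Then f a b = 0 for every coprime pair of integers (a, b) (i.e. whenever Int.gcd a b = 1). In other words, a solution of the homogeneous Jones–Wenzl winding constraints is determined on all primitive winding vectors by its values at (1,0) and (0,1). -/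
/-- Key lemma: under the JW constraints, `f` vanishes on coprime pairs in the
first quadrant, by strong induction on `|a| + |b|`. -/
lemma JW_key (f : ℤ → ℤ → ℂ)
    (hJW : ∀ m n r s : ℤ, m * s - n * r = 1 →
      f (m + r) (n + s) + f m n + f r s = 0)
    (h10 : f 1 0 = 0) (h01 : f 0 1 = 0) :
    ∀ (N : ℕ) (a b : ℤ), 0 ≤ a → 0 ≤ b → Int.gcd a b = 1 →
      a.natAbs + b.natAbs = N → f a b = 0 := by
  intro N
  induction N using Nat.strong_induction_on with
  | _ N ih =>
    intro a b ha hb hcop hN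
    rcases eq_or_lt_of_le ha with ha0 | ha1
    · -- a = 0, so b = 1
      have hb1 : b = 1 := by
        have : Int.gcd 0 b = 1 := ha0 ▸ hcop
        simp [Int.gcd] at this
        omega
      rw [← ha0, hb1]; exact h01
    rcases eq_or_lt_of_le hb with hb0 | hb1
    · -- b = 0, so a = 1
      have ha1' : a = 1 := by
        have : Int.gcd a 0 = 1 := hb0 ▸ hcop
        simp [Int.gcd] at this
        omega
      rw [ha1', ← hb0]; exact h10
    -- a ≥ 1, b ≥ 1. Bézout: x*a + y*b = 1
    obtain ⟨x, y, hxy⟩ := Int.isCoprime_iff_gcd_eq_one.mpr hcop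
    set u : ℤ := (-y) % a with hu_def
    have hu0 : 0 ≤ u := Int.emod_nonneg _ (by omega)
    have hua : u < a := Int.emod_lt_of_pos _ ha1
    have hu_eq : u = -y + a * (-((-y) / a)) := by
      rw [hu_def, Int.emod_def]; ring
    set v : ℤ := x + b * (-((-y) / a)) with hv_def
    have hav : a * v = 1 + b * u := by
      rw [hv_def, hu_eq, ← hxy]; ring
    have hv1 : 1 ≤ v := by nlinarith
    have hvb : v ≤ b := by nlinarith
    -- decomposition
    have hdet : (a - u) * v - (b - v) * u = 1 := by linarith
    have hstep := hJW (a - u) (b - v) u v hdet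
    have hsum : f a b + f (a - u) (b - v) + f u v = 0 := by
      have e1 : a - u + u = a := by ring
      have e2 : b - v + v = b := by ring
      rwa [e1, e2] at hstep
    have hcop1 : Int.gcd u v = 1 :=
      Int.isCoprime_iff_gcd_eq_one.mp ⟨-b, a, by linear_combination hav⟩
    have hcop2 : Int.gcd (a - u) (b - v) = 1 :=
      Int.isCoprime_iff_gcd_eq_one.mp ⟨v, -u, by linear_combination hav⟩
    have hlt1 : u.natAbs + v.natAbs < N := by omega
    have hlt2 : (a - u).natAbs + (b - v).natAbs < N := by omega
    have hz1 : f u v = 0 :=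
      ih _ hlt1 u v hu0 (by omega) hcop1 rfl
    have hz2 : f (a - u) (b - v) = 0 :=
      ih _ hlt2 (a - u) (b - v) (by omega) (by omega) hcop2 rfl
    rw [hz1, hz2] at hsum
    simpa using hsum

/-- **Determinacy of (even, even)-sector zero-energy states.** A solution
`f : ℤ → ℤ → ℂ` of the homogeneous Jones–Wenzl winding constraints — even under
`(a,b) ↦ (−a,−b)` and satisfying `f(m+r, n+s) + f(m,n) + f(r,s) = 0` whenever
`m·s − n·r = 1` — that vanishes at `(1,0)` and `(0,1)` vanishes on every primitive
(coprime) winding vector. -/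
theorem JW_constraints_determined
    (f : ℤ → ℤ → ℂ)
    (heven : ∀ a b : ℤ, f (-a) (-b) = f a b)
    (hJW : ∀ m n r s : ℤ, m * s - n * r = 1 →
      f (m + r) (n + s) + f m n + f r s = 0)
    (h10 : f 1 0 = 0) (h01 : f 0 1 = 0) :
    ∀ a b : ℤ, Int.gcd a b = 1 → f a b = 0 := by
  -- the rotated function g(x,y) = f(y, -x) satisfies the same hypotheses
  set g : ℤ → ℤ → ℂ := fun x y => f y (-x) with hg_def
  have gJW : ∀ m n r s : ℤ, m * s - n * r = 1 →
      g (m + r) (n + s) + g m n + g r s = 0 := by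
    intro m n r s h
    have hdet : n * (-r) - (-m) * s = 1 := by linarith
    have := hJW n (-m) s (-r) hdet
    have e : -m + -r = -(m + r) := by ring
    rw [e] at this
    simpa [hg_def] using this
  have g10 : g 1 0 = 0 := by
    have : f 0 (-1) = f 0 1 := by
      have := heven 0 1; simpa using this
    simpa [hg_def] using this.trans h01
  have g01 : g 0 1 = 0 := by simpa [hg_def] using h10
  have keyf := JW_key f hJW h10 h01
  have keyg := JW_key g gJW g10 g01
  intro a b hcop
  rcases le_or_gt 0 a with ha | ha <;> rcases le_or_gt 0 b with hb | hb
  · exact keyf _ a b ha hb hcop rfl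
  · -- a ≥ 0, b < 0 : f a b = g (-b) a
    have hcop' : Int.gcd (-b) a = 1 := by
      simpa [Int.gcd, Int.natAbs_neg, Nat.gcd_comm] using hcop
    have := keyg _ (-b) a (by omega) ha hcop' rfl
    simpa [hg_def] using this
  · -- a < 0, b ≥ 0 : f a b = f (-a) (-b) = g b (-a)
    have hcop' : Int.gcd b (-a) = 1 := by
      simpa [Int.gcd, Int.natAbs_neg, Nat.gcd_comm] using hcop
    have := keyg _ b (-a) hb (by omega) hcop' rfl
    rw [← heven a b]
    simpa [hg_def] using this
  · -- a < 0, b < 0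
    have hcop' : Int.gcd (-a) (-b) = 1 := by
      simpa [Int.gcd, Int.natAbs_neg] using hcop
    have := keyf _ (-a) (-b) (by omega) (by omega) hcop' rfl
    rw [← heven a b]; exact this
end

section
/- (The ground-state degeneracy in the (even, even) sector is three.) Let P := {(a, b) : ℤ × ℤ | Int.gcd a b = 1} be the set of primitive vectors, and let V be the ℂ-subspace of ℂ × (P → ℂ) consisting of pairs (z, f) such that f(−a, −b) = f(a, b) for all (a, b) ∈ P, and f(m + r, n + s) + f(m, n) + f(r, s) = 2·z for all integers m, n, r, s with m·s − n·r = 1 (note that (m,n), (r,s) and (m+r, n+s) then lie in P). Then the ℂ-linear map V → ℂ³ sending (z, f) to (z, f(1,0), f(0,1)) is bijective; in particular V has dimension 3 over ℂ, so the space of zero-energy torus states of the Jones–Wenzl loop model in the (even, even) winding sector is exactly three-dimensional. -/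
/-- Primitive winding vectors on the torus: coprime pairs of integers. -/
def PrimVec : Type := {p : ℤ × ℤ // Int.gcd p.1 p.2 = 1}

lemma prim_neg {a b : ℤ} (h : Int.gcd a b = 1) : Int.gcd (-a) (-b) = 1 := by
  simpa [Int.gcd] using h

lemma prim_fst {m n r s : ℤ} (h : m * s - n * r = 1) : Int.gcd m n = 1 :=
  Int.isCoprime_iff_gcd_eq_one.mp ⟨s, -r, by linarith [h]⟩

lemma prim_snd {m n r s : ℤ} (h : m * s - n * r = 1) : Int.gcd r s = 1 :=
  Int.isCoprime_iff_gcd_eq_one.mp ⟨-n, m, by linarith [h]⟩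

lemma prim_add {m n r s : ℤ} (h : m * s - n * r = 1) : Int.gcd (m + r) (n + s) = 1 :=
  Int.isCoprime_iff_gcd_eq_one.mp ⟨s, -r, by ring_nf; linarith [h]⟩

lemma prim10 : Int.gcd (1 : ℤ) (0 : ℤ) = 1 := rfl
lemma prim01 : Int.gcd (0 : ℤ) (1 : ℤ) = 1 := rfl

/-- The space of zero-energy torus states of the Jones–Wenzl loop model in the
(even, even) winding sector: pairs `(z, f)` of the amplitude `z = ψ(0,0)` and the
amplitudes `f(m,n) = ψ(2m,2n)` on primitive vectors, even under negation and satisfying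
the Jones–Wenzl winding constraint `f(m+r,n+s) + f(m,n) + f(r,s) = 2z` whenever
`m·s − n·r = 1`. -/
noncomputable def JWSpace : Submodule ℂ (ℂ × (PrimVec → ℂ)) where
  carrier := {w |
    (∀ p : PrimVec, w.2 ⟨(-p.1.1, -p.1.2), prim_neg p.2⟩ = w.2 p) ∧
    (∀ m n r s : ℤ, ∀ h : m * s - n * r = 1,
      w.2 ⟨(m + r, n + s), prim_add h⟩ + w.2 ⟨(m, n), prim_fst h⟩ +
        w.2 ⟨(r, s), prim_snd h⟩ = 2 * w.1)}
  add_mem' := by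
    rintro a b ⟨ha1, ha2⟩ ⟨hb1, hb2⟩
    refine ⟨fun p => ?_, fun m n r s h => ?_⟩
    · simp only [Set.mem_setOf_eq, Prod.snd_add, Pi.add_apply]
      show a.2 _ + b.2 _ = a.2 p + b.2 p
      rw [ha1 p, hb1 p]
    · simp only [Set.mem_setOf_eq, Prod.snd_add, Prod.fst_add, Pi.add_apply]
      show a.2 _ + b.2 _ + (a.2 _ + b.2 _) + (a.2 _ + b.2 _) = 2 * (a.1 + b.1)
      linear_combination ha2 m n r s h + hb2 m n r s h
  zero_mem' := by
    refine ⟨fun p => rfl, fun m n r s h => ?_⟩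
    simp only [Set.mem_setOf_eq, Prod.snd_zero, Prod.fst_zero, Pi.zero_apply]
    show (0 : ℂ) + 0 + 0 = 2 * 0
    ring
  smul_mem' := by
    rintro c a ⟨ha1, ha2⟩
    refine ⟨fun p => ?_, fun m n r s h => ?_⟩
    · simp only [Set.mem_setOf_eq, Prod.smul_snd, Pi.smul_apply]
      show c • a.2 _ = c • a.2 p
      rw [ha1 p]
    · simp only [Set.mem_setOf_eq, Prod.smul_snd, Prod.smul_fst, Pi.smul_apply,
        smul_eq_mul]
      show c * a.2 _ + c * a.2 _ + c * a.2 _ = 2 * (c * a.1)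
      linear_combination c * ha2 m n r s h

/-- The evaluation map `(z, f) ↦ (z, f(1,0), f(0,1))`. -/
noncomputable def evalJW : JWSpace →ₗ[ℂ] ℂ × ℂ × ℂ where
  toFun v := (v.1.1, v.1.2 ⟨(1, 0), prim10⟩, v.1.2 ⟨(0, 1), prim01⟩)
  map_add' v w := rfl
  map_smul' c v := rfl

/-! ### Auxiliary lemmas for the proof -/

lemma f_congr (f : PrimVec → ℂ) {a b a' b' : ℤ} (h : Int.gcd a b = 1) (h' : Int.gcd a' b' = 1)
    (e1 : a = a') (e2 : b = b') : f ⟨(a, b), h⟩ = f ⟨(a', b'), h'⟩ := by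
  subst e1; subst e2; rfl

lemma decomp {m n : ℤ} (hm : 1 ≤ m) (hn : 1 ≤ n) (h : Int.gcd m n = 1) :
    ∃ a b : ℤ, a * n - b * m = 1 ∧ 1 ≤ a ∧ a ≤ m ∧ 0 ≤ b ∧ b ≤ n - 1 := by
  obtain ⟨u, v, huv⟩ := Int.isCoprime_iff_gcd_eq_one.mpr h
  set k := (v - 1) / m with hk
  have he : (v - 1) % m = v - 1 - m * k := by rw [Int.emod_def]
  have h1 : 0 ≤ (v - 1) % m := Int.emod_nonneg _ (by omega)
  have h2 : (v - 1) % m < m := Int.emod_lt_of_pos _ (by omega)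
  have ha1 : 1 ≤ v - k * m := by linarith
  have ha2 : v - k * m ≤ m := by linarith
  have hab : (v - k * m) * n - (-u - k * n) * m = 1 := by linear_combination huv
  have h3 : 1 ≤ (v - k * m) * n := by nlinarith
  have hb1 : 0 ≤ -u - k * n := by
    by_contra hb
    push_neg at hb
    have h4 : (-u - k * n) * m ≤ (-u - k * n) := by nlinarith
    linarith
  have hb2 : -u - k * n ≤ n - 1 := by
    by_contra hb
    push_neg at hb
    have h5 : n * m ≤ (-u - k * n) * m := by nlinarith
    have h6 : (v - k * m) * n ≤ m * n := by nlinarith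
    nlinarith
  exact ⟨v - k * m, -u - k * n, hab, ha1, ha2, hb1, hb2⟩

lemma decomp2 {m n : ℤ} (hm : 1 ≤ m) (hn : n ≤ -1) (h : Int.gcd m n = 1) :
    ∃ a b : ℤ, a * n - b * m = -1 ∧ 1 ≤ a ∧ a ≤ m ∧ n + 1 ≤ b ∧ b ≤ 0 := by
  have h' : Int.gcd m (-n) = 1 := by simpa [Int.gcd] using h
  obtain ⟨a, b, hab, h1, h2, h3, h4⟩ := decomp hm (by omega) h'
  exact ⟨a, -b, by linarith, h1, h2, by omega, by omega⟩

/-- Any state with `z = 0`, `f(1,0) = 0`, `f(0,1) = 0` vanishes identically. -/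
lemma eval_zero_lemma (z : ℂ) (f : PrimVec → ℂ)
    (heven : ∀ p : PrimVec, f ⟨(-p.1.1, -p.1.2), prim_neg p.2⟩ = f p)
    (hcon : ∀ m n r s : ℤ, ∀ h : m * s - n * r = 1,
      f ⟨(m + r, n + s), prim_add h⟩ + f ⟨(m, n), prim_fst h⟩ + f ⟨(r, s), prim_snd h⟩ = 2 * z)
    (hz : z = 0) (h10 : f ⟨(1, 0), prim10⟩ = 0) (h01 : f ⟨(0, 1), prim01⟩ = 0) :
    ∀ p : PrimVec, f p = 0 := by
  have heven' : ∀ (m n : ℤ) (h : Int.gcd m n = 1), f ⟨(-m, -n), prim_neg h⟩ = f ⟨(m, n), h⟩ :=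
    fun m n h => heven ⟨(m, n), h⟩
  have main : ∀ N : ℕ, ∀ m n : ℤ, m.natAbs + n.natAbs ≤ N →
      ∀ h : Int.gcd m n = 1, f ⟨(m, n), h⟩ = 0 := by
    intro N
    induction N with
    | zero =>
      intro m n hN h
      exfalso
      obtain ⟨rfl, rfl⟩ : m = 0 ∧ n = 0 := by omega
      simp [Int.gcd] at h
    | succ N IH =>
      have pos_case : ∀ m n : ℤ, 1 ≤ m → 1 ≤ n → m.natAbs + n.natAbs ≤ N + 1 →
          ∀ h : Int.gcd m n = 1, f ⟨(m, n), h⟩ = 0 := by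
        intro m n hm hn hN h
        obtain ⟨a, b, hab, ha1, ha2, hb1, hb2⟩ := decomp hm hn h
        have hdet : a * (n - b) - b * (m - a) = 1 := by linear_combination hab
        have hc := hcon a b (m - a) (n - b) hdet
        rw [f_congr f (prim_add hdet) h (by ring) (by ring)] at hc
        have hv := IH a b (by omega) (prim_fst hdet)
        have hw := IH (m - a) (n - b) (by omega) (prim_snd hdet)
        linear_combination hc - hv - hw + 2 * hz
      have neg_case : ∀ m n : ℤ, 1 ≤ m → n ≤ -1 → m.natAbs + n.natAbs ≤ N + 1 →
          ∀ h : Int.gcd m n = 1, f ⟨(m, n), h⟩ = 0 := by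
        intro m n hm hn hN h
        obtain ⟨a, b, hab, ha1, ha2, hb1, hb2⟩ := decomp2 hm hn h
        have hdet : (m - a) * b - (n - b) * a = 1 := by linear_combination -hab
        have hc := hcon (m - a) (n - b) a b hdet
        rw [f_congr f (prim_add hdet) h (by ring) (by ring)] at hc
        have hv := IH (m - a) (n - b) (by omega) (prim_fst hdet)
        have hw := IH a b (by omega) (prim_snd hdet)
        linear_combination hc - hv - hw + 2 * hz
      intro m n hN h
      rcases lt_trichotomy m 0 with hm|hm|hm
      · rw [← heven' m n h]
        rcases lt_trichotomy n 0 with hn|hn|hn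
        · exact pos_case (-m) (-n) (by omega) (by omega) (by omega) _
        · subst hn
          have hm1 : m.natAbs = 1 := by simpa [Int.gcd] using h
          rw [f_congr f (prim_neg h) prim10 (by omega) (by omega)]
          exact h10
        · exact neg_case (-m) (-n) (by omega) (by omega) (by omega) _
      · subst hm
        have hn1 : n.natAbs = 1 := by simpa [Int.gcd] using h
        rcases (by omega : n = 1 ∨ n = -1) with rfl|rfl
        · exact h01
        · rw [← heven' 0 (-1) h, f_congr f (prim_neg h) prim01 (by omega) (by omega)]
          exact h01
      · rcases lt_trichotomy n 0 with hn|hn|hn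
        · exact neg_case m n (by omega) (by omega) hN h
        · subst hn
          have hm1 : m.natAbs = 1 := by simpa [Int.gcd] using h
          rw [f_congr f h prim10 (by omega) (by omega)]
          exact h10
        · exact pos_case m n (by omega) (by omega) hN h
  intro p
  obtain ⟨⟨m, n⟩, hp⟩ := p
  exact main (m.natAbs + n.natAbs) m n le_rfl hp

/-- The parity solution with values `b` on the class of `(0,1)`, `a` on the class of
`(1,0)` and `2z - a - b` on the class of `(1,1)`. -/
noncomputable def sol (z a b : ℂ) (p : PrimVec) : ℂ :=
  if p.1.1 % 2 = 0 then b else if p.1.2 % 2 = 0 then a else 2 * z - a - b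

lemma sol_even (z a b : ℂ) (m n : ℤ) (h : Int.gcd m n = 1) (h' : Int.gcd (-m) (-n) = 1) :
    sol z a b ⟨(-m, -n), h'⟩ = sol z a b ⟨(m, n), h⟩ := by
  simp only [sol]
  split_ifs <;> first | rfl | omega

lemma sol_con (z a b : ℂ) (m n r s : ℤ) (h : m * s - n * r = 1)
    (h1 : Int.gcd (m + r) (n + s) = 1) (h2 : Int.gcd m n = 1) (h3 : Int.gcd r s = 1) :
    sol z a b ⟨(m + r, n + s), h1⟩ + sol z a b ⟨(m, n), h2⟩ + sol z a b ⟨(r, s), h3⟩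
      = 2 * z := by
  have h' : m * s = n * r + 1 := by linarith
  have key : m % 2 * (s % 2) % 2 = (n % 2 * (r % 2) % 2 + 1) % 2 := by
    rw [← Int.mul_emod, ← Int.mul_emod, h']
    generalize n * r = t
    omega
  rcases Int.emod_two_eq m with hm|hm <;> rcases Int.emod_two_eq n with hn|hn <;>
    rcases Int.emod_two_eq r with hr|hr <;> rcases Int.emod_two_eq s with hs|hs <;>
    rw [hm, hn, hr, hs] at key <;>
    first
      | exact absurd key (by decide)
      | (simp only [sol]; split_ifs <;> first | omega | ring)

lemma sol_mem (z a b : ℂ) : ((z, sol z a b) : ℂ × (PrimVec → ℂ)) ∈ JWSpace := by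
  constructor
  · intro p
    obtain ⟨⟨m, n⟩, hp⟩ := p
    exact sol_even z a b m n hp (prim_neg hp)
  · intro m n r s h
    exact sol_con z a b m n r s h (prim_add h) (prim_fst h) (prim_snd h)

/-- **The ground-state degeneracy in the (even, even) sector is three.** The ℂ-linear map
sending a zero-energy (even, even)-sector state `(z, f)` of the Jones–Wenzl loop model on
the torus to `(z, f(1,0), f(0,1))` is bijective; in particular the space of such states is
exactly three-dimensional. -/
theorem JW_even_even_sector_three_dimensional :
    Function.Bijective evalJW ∧ Module.finrank ℂ JWSpace = 3 := by
  have hinj : Function.Injective evalJW := by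
    apply (injective_iff_map_eq_zero evalJW).mpr
    rintro ⟨⟨z, f⟩, heven, hcon⟩ hv
    have h1 : z = 0 := congrArg Prod.fst hv
    have h2 : f ⟨(1, 0), prim10⟩ = 0 := congrArg (fun w => w.2.1) hv
    have h3 : f ⟨(0, 1), prim01⟩ = 0 := congrArg (fun w => w.2.2) hv
    apply Subtype.ext
    refine Prod.ext_iff.mpr ⟨h1, funext fun p => ?_⟩
    exact eval_zero_lemma z f heven hcon h1 h2 h3 p
  have hsurj : Function.Surjective evalJW := by
    rintro ⟨z, a, b⟩
    refine ⟨⟨(z, sol z a b), sol_mem z a b⟩, ?_⟩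
    show (z, sol z a b ⟨(1, 0), prim10⟩, sol z a b ⟨(0, 1), prim01⟩) = (z, a, b)
    norm_num [sol]
  refine ⟨⟨hinj, hsurj⟩, ?_⟩
  have e : JWSpace ≃ₗ[ℂ] (ℂ × ℂ × ℂ) := LinearEquiv.ofBijective evalJW ⟨hinj, hsurj⟩
  rw [e.finrank_eq]
  simp [Module.finrank_prod]
end
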